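/- Cycle vectors lie in L_q and constrain all HLF solutions: let V, E be finite types, M : Matrix V E (ZMod 2), x : V → Bool, and form the HLF instance on V ⊕ E with A(inl v, inr e) = A(inr e, inl v) = the {0,1}-lift of M(v,e) in ZMod 4, all other entries of A zero, b(inl v) = the lift of x_v, and b(inr e) = 0. Suppose c : E → Bool satisfies M·ĉ = 0 over ZMod 2 (for every v, ∑_e M(v,e)·ĉ_e = 0, where ĉ_e lifts c_e). Then the vector u₀ with u₀(inl v) = false and u₀(inr e) = c_e lies in L_q and q(u₀) = 0; consequently, every HLF solution p for (A, b) satisfies ∑_e p̂(inr e)·ĉ_e = 0 in ZMod 2. -/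

import Mathlib

/-- Lift of a Boolean to `{0,1} ⊆ ZMod 4`. -/
def b4 (u : Bool) : ZMod 4 := if u then 1 else 0

/-- Lift of a Boolean to `{0,1} ⊆ ZMod 2`. -/
def b2 (u : Bool) : ZMod 2 := if u then 1 else 0

/-- Lift of `ZMod 2` to `{0,1} ⊆ ZMod 4`. -/
def lift24 (t : ZMod 2) : ZMod 4 := (t.val : ZMod 4)

/-- The quadratic form `q(u) = uᵀ A u + bᵀ u` over `ZMod 4`, on Boolean vectors. -/
def qform {ι : Type} [Fintype ι] (A : Matrix ι ι (ZMod 4)) (b : ι → ZMod 4)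
    (u : ι → Bool) : ZMod 4 :=
  (∑ i, ∑ j, A i j * b4 (u i) * b4 (u j)) + ∑ i, b i * b4 (u i)

/-- The hidden linear subspace `L_q = {u | ∀ v, q(u ⊕ v) = q(u) + q(v)}`. -/
def Lq {ι : Type} [Fintype ι] (A : Matrix ι ι (ZMod 4)) (b : ι → ZMod 4) :
    Set (ι → Bool) :=
  {u | ∀ v, qform A b (fun i => xor (u i) (v i)) = qform A b u + qform A b v}

/-- `p` is a solution of the Hidden Linear Function problem for `(A, b)` if
`q(u) = 2⟨p,u⟩` for every `u ∈ L_q`, where `⟨p,u⟩` is the mod-2 inner product. -/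
def IsHLFSolution {ι : Type} [Fintype ι] (A : Matrix ι ι (ZMod 4)) (b : ι → ZMod 4)
    (p : ι → Bool) : Prop :=
  ∀ u ∈ Lq A b, qform A b u = 2 * lift24 (∑ i, b2 (p i) * b2 (u i))

/-- The HLF matrix of the RPHP-to-HLF reduction: the `{0,1}`-lift of the incidence
matrix `M`, placed in the two off-diagonal blocks of a `(V ⊕ E) × (V ⊕ E)` matrix. -/
def hlfA {V E : Type} (M : Matrix V E (ZMod 2)) : Matrix (V ⊕ E) (V ⊕ E) (ZMod 4) :=
  fun i j => match i, j with
    | Sum.inl v, Sum.inr e => ((M v e).val : ZMod 4)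
    | Sum.inr e, Sum.inl v => ((M v e).val : ZMod 4)
    | _, _ => 0

/-- The HLF vector of the RPHP-to-HLF reduction: the lift of `x` on `V`, zero on `E`. -/
def hlfb {V E : Type} (x : V → Bool) : V ⊕ E → ZMod 4 :=
  Sum.elim (fun v => b4 (x v)) (fun _ => 0)


lemma b4_eq_lift (a : Bool) : b4 a = lift24 (b2 a) := by cases a <;> rfl

lemma lift24_mul (s t : ZMod 2) : lift24 (s * t) = lift24 s * lift24 t := by
  revert s t; decide

lemma two_lift_add (s t : ZMod 2) : 2 * lift24 (s + t) = 2 * lift24 s + 2 * lift24 t := by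
  revert s t; decide

lemma two_lift_sum {α : Type} (s : Finset α) (f : α → ZMod 2) :
    2 * lift24 (∑ a ∈ s, f a) = ∑ a ∈ s, 2 * lift24 (f a) := by
  classical
  induction s using Finset.induction with
  | empty => simp; rfl
  | @insert a s h ih => rw [Finset.sum_insert h, Finset.sum_insert h, two_lift_add, ih]

lemma two_mul_xor (y : ZMod 4) (a b : Bool) :
    2 * (y * b4 (xor a b)) = 2 * (y * b4 a) + 2 * (y * b4 b) := by
  revert y; cases a <;> cases b <;> decide

lemma two_lift_eq_zero (t : ZMod 2) (h : 2 * lift24 t = 0) : t = 0 := by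
  revert h; revert t; decide

lemma qform_eq {V E : Type} [Fintype V] [Fintype E] (M : Matrix V E (ZMod 2)) (x : V → Bool)
    (u : V ⊕ E → Bool) :
    qform (hlfA M) (hlfb x) u =
      (∑ v, ∑ e, 2 * (((M v e).val : ZMod 4) * b4 (u (Sum.inl v)) * b4 (u (Sum.inr e))))
      + ∑ v, b4 (x v) * b4 (u (Sum.inl v)) := by
  simp only [qform, hlfA, hlfb, Fintype.sum_sum_type, Sum.elim_inl, Sum.elim_inr,
    zero_mul, Finset.sum_const_zero, add_zero, zero_add]
  rw [Finset.sum_comm (s := Finset.univ) (t := Finset.univ)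
    (f := fun e v => ((M v e).val : ZMod 4) * b4 (u (Sum.inr e)) * b4 (u (Sum.inl v)))]
  rw [← Finset.sum_add_distrib]
  congr 1
  · apply Finset.sum_congr rfl; intro v _
    rw [← Finset.sum_add_distrib]
    apply Finset.sum_congr rfl; intro e _
    ring

/-- Cycle vectors lie in `L_q`, have `q`-value zero, and constrain all HLF solutions:
if `M·ĉ = 0` over `ZMod 2`, then `(0, c) ∈ L_q`, `q(0, c) = 0`, and every HLF solution `p`
has even parity on the support of `c` (i.e. `∑_e p̂(inr e)·ĉ_e = 0` in `ZMod 2`). -/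
theorem cycle_mem_Lq_and_constrains {V E : Type} [Fintype V] [Fintype E]
    (M : Matrix V E (ZMod 2)) (x : V → Bool)
    (c : E → Bool) (hc : ∀ v, ∑ e, M v e * b2 (c e) = 0) :
    (Sum.elim (fun _ => false) c) ∈ Lq (hlfA M) (hlfb x) ∧
    qform (hlfA M) (hlfb x) (Sum.elim (fun _ => false) c) = 0 ∧
    ∀ p : V ⊕ E → Bool, IsHLFSolution (hlfA M) (hlfb x) p →
      ∑ e, b2 (p (Sum.inr e)) * b2 (c e) = 0 := by
  classical
  have hq0 : qform (hlfA M) (hlfb x) (Sum.elim (fun _ => false) c) = 0 := by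
    rw [qform_eq]; simp [b4]
  have key : ∀ w : V ⊕ E → Bool, ∀ v : V,
      ∑ e, 2 * (((M v e).val : ZMod 4) * b4 (w (Sum.inl v)) * b4 (c e)) = 0 := by
    intro w v
    have h2 : ∑ e, 2 * (((M v e).val : ZMod 4) * b4 (w (Sum.inl v)) * b4 (c e))
        = b4 (w (Sum.inl v)) * ∑ e, 2 * lift24 (M v e * b2 (c e)) := by
      rw [Finset.mul_sum]; apply Finset.sum_congr rfl; intro e _
      rw [lift24_mul, b4_eq_lift (c e)]
      have hl : ((M v e).val : ZMod 4) = lift24 (M v e) := rfl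
      rw [hl]; ring
    rw [h2, ← two_lift_sum, hc v]
    simp [lift24]
  have hmem : (Sum.elim (fun _ => false) c) ∈ Lq (hlfA M) (hlfb x) := by
    intro w
    rw [hq0, zero_add, qform_eq, qform_eq]
    simp only [Sum.elim_inl, Sum.elim_inr, Bool.false_xor]
    congr 1
    apply Finset.sum_congr rfl; intro v _
    calc ∑ e, 2 * (((M v e).val : ZMod 4) * b4 (w (Sum.inl v)) * b4 (xor (c e) (w (Sum.inr e))))
        = ∑ e, (2 * (((M v e).val : ZMod 4) * b4 (w (Sum.inl v)) * b4 (c e))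
            + 2 * (((M v e).val : ZMod 4) * b4 (w (Sum.inl v)) * b4 (w (Sum.inr e)))) := by
          apply Finset.sum_congr rfl; intro e _
          rw [two_mul_xor]
      _ = ∑ e, 2 * (((M v e).val : ZMod 4) * b4 (w (Sum.inl v)) * b4 (c e))
            + ∑ e, 2 * (((M v e).val : ZMod 4) * b4 (w (Sum.inl v)) * b4 (w (Sum.inr e))) :=
          Finset.sum_add_distrib
      _ = ∑ e, 2 * (((M v e).val : ZMod 4) * b4 (w (Sum.inl v)) * b4 (w (Sum.inr e))) := by
          rw [key w v, zero_add]
  refine ⟨hmem, hq0, ?_⟩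
  intro p hp
  have h := hp _ hmem
  rw [hq0, Fintype.sum_sum_type] at h
  simp only [Sum.elim_inl, Sum.elim_inr, b2, if_neg (by simp : ¬(false = true))] at h
  simp only [Bool.false_eq_true, if_false, mul_zero, Finset.sum_const_zero, zero_add] at h
  exact two_lift_eq_zero _ h.symm
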